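/- Mini-batch SAM linear convergence: under the assumptions of β-smoothness of each f_i, λ-smoothness and α-PL of f, and interpolation, for any batch size B ≥ 1 and ρ ≤ 1/((β/α + 1/2)β), running mini-batch SAM with constant step size η★_B = (1 − (κ_B + 1/2)βρ)/(2λκ_B(βρ+1)²) where κ_B = (1/B)((B−1)/2 + β/α) gives E[f(x_t)] ≤ (1 − (α η★_B/2)(1 − (κ_B + 1/2)βρ))^t f(x_0). -/

import Mathlib

open scoped BigOperators

open scoped RealInnerProductSpace
open InnerProductSpace

variable {d : ℕ}
local notation "E" => EuclideanSpace ℝ (Fin d)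

lemma hasDerivAt_line (f : E → ℝ) (hf : Differentiable ℝ f) (x h : E) (t : ℝ) :
    HasDerivAt (fun s : ℝ => f (x + s • h)) ⟪gradient f (x + t • h), h⟫ t := by
  have hg : HasGradientAt f (gradient f (x + t • h)) (x + t • h) :=
    (hf (x + t • h)).hasGradientAt
  have hF : HasFDerivAt f (toDual ℝ E (gradient f (x + t • h))) (x + t • h) :=
    hasGradientAt_iff_hasFDerivAt.mp hg
  have hline : HasDerivAt (fun s : ℝ => x + s • h) h t := by
    simpa using ((hasDerivAt_id t).smul_const h).const_add x
  exact hF.comp_hasDerivAt t hline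

lemma smooth_descent {f : E → ℝ} (hf : Differentiable ℝ f) {L : ℝ} (hL : 0 ≤ L)
    (hlip : ∀ x y, ‖gradient f x - gradient f y‖ ≤ L * ‖x - y‖) (x h : E) :
    f (x + h) ≤ f x + ⟪gradient f x, h⟫ + L / 2 * ‖h‖ ^ 2 := by
  set φ : ℝ → ℝ := fun t => f (x + t • h) - t * ⟪gradient f x, h⟫ - L * t ^ 2 / 2 * ‖h‖ ^ 2
    with hφdef
  have hφ : ∀ t : ℝ, HasDerivAt φ
      (⟪gradient f (x + t • h), h⟫ - ⟪gradient f x, h⟫ - L * t * ‖h‖ ^ 2) t := by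
    intro t
    have h1 := hasDerivAt_line f hf x h t
    have h2 : HasDerivAt (fun t : ℝ => t * ⟪gradient f x, h⟫) ⟪gradient f x, h⟫ t := by
      simpa using (hasDerivAt_id t).mul_const ⟪gradient f x, h⟫
    have h3 : HasDerivAt (fun t : ℝ => L * t ^ 2 / 2 * ‖h‖ ^ 2) (L * t * ‖h‖ ^ 2) t := by
      have : HasDerivAt (fun t : ℝ => t ^ 2) (2 * t) t := by
        simpa using hasDerivAt_pow 2 t
      have := ((this.const_mul L).div_const 2).mul_const (‖h‖ ^ 2)
      exact this.congr_deriv (by ring)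
    exact (h1.sub h2).sub h3
  have hderiv_nonpos : ∀ t ∈ Set.Ioo (0:ℝ) 1, deriv φ t ≤ 0 := by
    intro t ht
    rw [(hφ t).deriv]
    have hdist : ‖gradient f (x + t • h) - gradient f x‖ ≤ L * (t * ‖h‖) := by
      have := hlip (x + t • h) x
      simpa [norm_smul, abs_of_nonneg ht.1.le] using this
    have hinner : ⟪gradient f (x + t • h), h⟫ - ⟪gradient f x, h⟫ ≤ L * t * ‖h‖ ^ 2 := by
      rw [← inner_sub_left]
      calc ⟪gradient f (x + t • h) - gradient f x, h⟫
          ≤ ‖gradient f (x + t • h) - gradient f x‖ * ‖h‖ := real_inner_le_norm _ _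
        _ ≤ L * (t * ‖h‖) * ‖h‖ := by
            apply mul_le_mul_of_nonneg_right hdist (norm_nonneg _)
        _ = L * t * ‖h‖ ^ 2 := by ring
    linarith
  have hanti : AntitoneOn φ (Set.Icc (0:ℝ) 1) := by
    apply antitoneOn_of_deriv_nonpos (convex_Icc 0 1)
    · exact fun t _ => ((hφ t).continuousAt).continuousWithinAt
    · exact fun t _ => ((hφ t).differentiableAt).differentiableWithinAt
    · intro t ht
      rw [interior_Icc] at ht
      exact hderiv_nonpos t ht
  have h01 := hanti (Set.left_mem_Icc.mpr zero_le_one) (Set.right_mem_Icc.mpr zero_le_one)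
    zero_le_one
  have e0 : φ 0 = f x := by simp [hφdef]
  have e1 : φ 1 = f (x + h) - ⟪gradient f x, h⟫ - L / 2 * ‖h‖ ^ 2 := by
    simp [hφdef]
  rw [e0, e1] at h01
  linarith

lemma grad_sq_le_of_nonneg {f : E → ℝ} (hf : Differentiable ℝ f) {L : ℝ} (hL : 0 < L)
    (hlip : ∀ x y, ‖gradient f x - gradient f y‖ ≤ L * ‖x - y‖)
    (hnn : ∀ x, 0 ≤ f x) (x : E) :
    ‖gradient f x‖ ^ 2 ≤ 2 * L * f x := by
  have key := smooth_descent hf hL.le hlip x (-(L⁻¹ • gradient f x))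
  have e1 : ⟪gradient f x, -(L⁻¹ • gradient f x)⟫ = -(L⁻¹ * ‖gradient f x‖ ^ 2) := by
    rw [inner_neg_right, real_inner_smul_right, real_inner_self_eq_norm_sq]
  have e2 : ‖-(L⁻¹ • gradient f x)‖ ^ 2 = L⁻¹ ^ 2 * ‖gradient f x‖ ^ 2 := by
    rw [norm_neg, norm_smul]
    simp [abs_of_nonneg (inv_nonneg.mpr hL.le), mul_pow]
  rw [e1, e2] at key
  have h0 := hnn (x + -(L⁻¹ • gradient f x))
  have hL' : L⁻¹ > 0 := inv_pos.mpr hL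
  have h4 : 0 ≤ f x - L⁻¹ * ‖gradient f x‖ ^ 2 + L / 2 * (L⁻¹ ^ 2 * ‖gradient f x‖ ^ 2) :=
    by linarith [le_trans h0 key]
  have h6 : L⁻¹ * ‖gradient f x‖ ^ 2 - L / 2 * (L⁻¹ ^ 2 * ‖gradient f x‖ ^ 2)
      = ‖gradient f x‖ ^ 2 / (2 * L) := by
    field_simp
    ring
  have h5 : ‖gradient f x‖ ^ 2 / (2 * L) ≤ f x := by linarith
  have := (div_le_iff₀ (by positivity : (0:ℝ) < 2 * L)).mp h5
  linarith

lemma gradient_const_mul_sum {n : ℕ} (fi : Fin n → E → ℝ)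
    (hdiff : ∀ i, Differentiable ℝ (fi i)) (c : ℝ) (x : E) :
    gradient (fun y => c * ∑ i, fi i y) x = c • ∑ i, gradient (fi i) x := by
  have hFi : ∀ i, HasFDerivAt (fi i) (toDual ℝ E (gradient (fi i) x)) x := fun i =>
    hasGradientAt_iff_hasFDerivAt.mp ((hdiff i x).hasGradientAt)
  have hsum : HasFDerivAt (fun y => ∑ i, fi i y)
      (∑ i, toDual ℝ E (gradient (fi i) x)) x := HasFDerivAt.fun_sum (fun i _ => hFi i)
  have hmul : HasFDerivAt (fun y => c * ∑ i, fi i y)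
      (c • ∑ i, toDual ℝ E (gradient (fi i) x)) x := hsum.const_mul c
  have heq : (c • ∑ i, toDual ℝ E (gradient (fi i) x))
      = toDual ℝ E (c • ∑ i, gradient (fi i) x) := by
    rw [map_smul, map_sum]
  rw [heq] at hmul
  have := (hasFDerivAt_iff_hasGradientAt.mp hmul).gradient
  rwa [LinearIsometryEquiv.symm_apply_apply] at this

lemma sum_eval {n B : ℕ} {γ : Type*} [AddCommMonoid γ] (j : Fin B) (w : Fin n → γ) :
    ∑ b : Fin B → Fin n, w (b j) = n ^ (B - 1) • ∑ i, w i := by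
  rw [← (Equiv.funSplitAt j (Fin n)).symm.sum_comp (fun b => w (b j))]
  have : ∀ p : Fin n × ({ k // k ≠ j } → Fin n),
      w ((Equiv.funSplitAt j (Fin n)).symm p j) = w p.1 := by
    intro p
    congr 1
    have := (Equiv.funSplitAt j (Fin n)).apply_symm_apply p
    exact congrArg Prod.fst this
  rw [Fintype.sum_prod_type]
  simp only [this]
  rw [Finset.sum_congr rfl (fun a _ => Finset.sum_const (w a))]
  have hc : Fintype.card ({ k // k ≠ j } → Fin n) = n ^ (B - 1) := by
    rw [Fintype.card_fun, Fintype.card_fin]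
    congr 1
    rw [Fintype.card_subtype_compl, Fintype.card_fin, Fintype.card_subtype_eq]
  simp only [Finset.card_univ, hc]
  rw [Finset.smul_sum]

lemma cast_mul_pow_pred {n : ℕ} : ∀ B : ℕ, ((B * n ^ (B - 1) : ℕ) : ℝ) * n = B * (n:ℝ) ^ B
  | 0 => by simp
  | (m+1) => by push_cast; ring

lemma sum_norm_sq_batch {n : ℕ} (v : Fin n → E) :
    ∀ B : ℕ, (∑ b : Fin B → Fin n, ‖∑ j, v (b j)‖ ^ 2) * (n:ℝ) ^ 2
      = B * (n:ℝ) ^ B * n * (∑ i, ‖v i‖ ^ 2)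
        + B * ((B:ℝ) - 1) * (n:ℝ) ^ B * ‖∑ i, v i‖ ^ 2
  | 0 => by simp
  | (B+1) => by
    have hS : ∑ b' : Fin B → Fin n, (∑ j, v (b' j)) = (B * n ^ (B - 1) : ℕ) • (∑ i, v i) := by
      rw [Finset.sum_comm]
      simp only [sum_eval]
      rw [Finset.sum_const, Finset.card_univ, Fintype.card_fin, smul_smul]
    have hsplit : (∑ b : Fin (B+1) → Fin n, ‖∑ j, v (b j)‖ ^ 2)
        = ∑ a : Fin n, ∑ b' : Fin B → Fin n, ‖v a + ∑ j, v (b' j)‖ ^ 2 := by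
      rw [← Equiv.sum_comp (Fin.consEquiv (fun _ : Fin (B+1) => Fin n))
        (fun b => ‖∑ j, v (b j)‖ ^ 2), Fintype.sum_prod_type]
      apply Finset.sum_congr rfl; intro a _
      apply Finset.sum_congr rfl; intro b' _
      congr 1
      rw [Fin.sum_univ_succ]
      simp [Fin.consEquiv]
    rw [hsplit]
    have hexp : ∀ a : Fin n, ∑ b' : Fin B → Fin n, ‖v a + ∑ j, v (b' j)‖ ^ 2
        = (n:ℝ) ^ B * ‖v a‖ ^ 2 + 2 * ((B * n ^ (B-1) : ℕ) : ℝ) * ⟪v a, ∑ i, v i⟫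
          + ∑ b' : Fin B → Fin n, ‖∑ j, v (b' j)‖ ^ 2 := by
      intro a
      simp only [norm_add_sq_real]
      rw [Finset.sum_add_distrib, Finset.sum_add_distrib]
      congr 2
      · rw [Finset.sum_const, Finset.card_univ, Fintype.card_fun, nsmul_eq_mul]
        simp [Fintype.card_fin, mul_comm]
      · rw [← Finset.mul_sum, ← inner_sum, hS, ← Nat.cast_smul_eq_nsmul ℝ,
          real_inner_smul_right]
        ring
    simp only [hexp, Finset.sum_add_distrib]
    rw [← Finset.mul_sum, ← Finset.mul_sum, ← sum_inner, real_inner_self_eq_norm_sq,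
      Finset.sum_const, Finset.card_univ, Fintype.card_fin, nsmul_eq_mul]
    have IH := sum_norm_sq_batch v B
    have hc := cast_mul_pow_pred (n := n) B
    push_cast at IH hc ⊢
    linear_combination (n:ℝ) * IH + 2 * ‖∑ i, v i‖ ^ 2 * (n:ℝ) * hc

section OneStep
variable {n B : ℕ}

set_option maxHeartbeats 1000000 in
lemma one_step (hn : 0 < n) (hB : 1 ≤ B)
    (β lam α ρ η κ : ℝ)
    (hβ : 0 < β) (hlam : 0 < lam) (hα : 0 < α) (hρ0 : 0 ≤ ρ)
    (hκ : κ = (B : ℝ)⁻¹ * (((B : ℝ) - 1) / 2 + β / α))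
    (hη : η = (1 - (κ + 1/2) * β * ρ) / (2 * lam * κ * (β * ρ + 1) ^ 2))
    (hK1 : (κ + 1/2) * β * ρ ≤ 1)
    (fi : Fin n → E → ℝ) (f : E → ℝ)
    (hfdef : ∀ x, f x = (n : ℝ)⁻¹ * ∑ i, fi i x)
    (hdiff : ∀ i, Differentiable ℝ (fi i)) (hfdiff : Differentiable ℝ f)
    (hnonneg : ∀ i x, 0 ≤ fi i x)
    (hβsmooth : ∀ i x y, ‖gradient (fi i) x - gradient (fi i) y‖ ≤ β * ‖x - y‖)
    (hlamsmooth : ∀ x y, ‖gradient f x - gradient f y‖ ≤ lam * ‖x - y‖)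
    (hPL : ∀ x, α * f x ≤ ‖gradient f x‖ ^ 2)
    (x : E) :
    ∑ b : Fin B → Fin n,
      f (x - η • ((B:ℝ)⁻¹ • ∑ j, gradient (fi (b j))
          (x + ρ • ((B:ℝ)⁻¹ • ∑ j, gradient (fi (b j)) x))))
      ≤ (n:ℝ)^B * ((1 - α * η / 2 * (1 - (κ + 1/2) * β * ρ)) * f x) := by
  have hB0 : (0:ℝ) < (B:ℝ) := by exact_mod_cast hB
  have hn0 : (0:ℝ) < (n:ℝ) := by exact_mod_cast hn
  have hB1 : (1:ℝ) ≤ (B:ℝ) := by exact_mod_cast hB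
  have hκpos : 0 < κ := by
    have h2 : 0 < β / α := div_pos hβ hα
    rw [hκ]
    have : 0 < ((B:ℝ) - 1) / 2 + β / α := by linarith
    positivity
  set K := (κ + 1/2) * β * ρ with hKdef
  have hK0 : 0 ≤ K := by positivity
  have hη0 : 0 ≤ η := by
    rw [hη]
    apply div_nonneg (by linarith)
    positivity
  have hηrel : lam * η * κ * (β * ρ + 1) ^ 2 = (1 - K) / 2 := by
    have hden : 2 * lam * κ * (β * ρ + 1) ^ 2 ≠ 0 := by positivity
    rw [hη]
    field_simp
  -- gradient of f in terms of the fi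
  have hfeq : f = fun y => (n:ℝ)⁻¹ * ∑ i, fi i y := funext hfdef
  have hGx : ∀ y, gradient f y = (n:ℝ)⁻¹ • ∑ i, gradient (fi i) y := by
    intro y
    conv_lhs => rw [hfeq]
    exact gradient_const_mul_sum fi hdiff _ y
  have hV : ∑ i, gradient (fi i) x = (n:ℝ) • gradient f x := by
    rw [hGx x, smul_smul, mul_inv_cancel₀ hn0.ne', one_smul]
  set G := gradient f x with hGdef
  set v : Fin n → E := fun i => gradient (fi i) x with hvdef
  set g : (Fin B → Fin n) → E := fun b => (B:ℝ)⁻¹ • ∑ j, v (b j) with hgdef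
  set g' : (Fin B → Fin n) → E :=
    fun b => (B:ℝ)⁻¹ • ∑ j, gradient (fi (b j)) (x + ρ • g b) with hg'def
  -- per-batch bounds
  have hdiffg : ∀ b, ‖g' b - g b‖ ≤ β * ρ * ‖g b‖ := by
    intro b
    have : g' b - g b = (B:ℝ)⁻¹ • ∑ j, (gradient (fi (b j)) (x + ρ • g b) - v (b j)) := by
      rw [hg'def, hgdef, ← smul_sub, Finset.sum_sub_distrib]
    rw [this, norm_smul]
    have hsum : ‖∑ j, (gradient (fi (b j)) (x + ρ • g b) - v (b j))‖
        ≤ (B:ℝ) * (β * (ρ * ‖g b‖)) := by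
      calc ‖∑ j, (gradient (fi (b j)) (x + ρ • g b) - v (b j))‖
          ≤ ∑ j : Fin B, ‖gradient (fi (b j)) (x + ρ • g b) - v (b j)‖ :=
            norm_sum_le _ _
        _ ≤ ∑ j : Fin B, β * (ρ * ‖g b‖) := by
            apply Finset.sum_le_sum
            intro j _
            have := hβsmooth (b j) (x + ρ • g b) x
            simpa [norm_smul, abs_of_nonneg hρ0] using this
        _ = (B:ℝ) * (β * (ρ * ‖g b‖)) := by
            rw [Finset.sum_const, Finset.card_univ, Fintype.card_fin, nsmul_eq_mul]
    calc |(B:ℝ)⁻¹| * ‖∑ j, (gradient (fi (b j)) (x + ρ • g b) - v (b j))‖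
        ≤ (B:ℝ)⁻¹ * ((B:ℝ) * (β * (ρ * ‖g b‖))) := by
          rw [abs_of_nonneg (by positivity : (0:ℝ) ≤ (B:ℝ)⁻¹)]
          exact mul_le_mul_of_nonneg_left hsum (by positivity)
      _ = β * ρ * ‖g b‖ := by field_simp
  have hg'norm : ∀ b, ‖g' b‖ ^ 2 ≤ (β * ρ + 1) ^ 2 * ‖g b‖ ^ 2 := by
    intro b
    have h1 : ‖g' b‖ ≤ (β * ρ + 1) * ‖g b‖ := by
      calc ‖g' b‖ = ‖g b + (g' b - g b)‖ := by rw [add_sub_cancel]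
        _ ≤ ‖g b‖ + ‖g' b - g b‖ := norm_add_le _ _
        _ ≤ ‖g b‖ + β * ρ * ‖g b‖ := by linarith [hdiffg b]
        _ = (β * ρ + 1) * ‖g b‖ := by ring
    have := pow_le_pow_left₀ (norm_nonneg _) h1 2
    calc ‖g' b‖ ^ 2 ≤ ((β * ρ + 1) * ‖g b‖) ^ 2 := this
      _ = (β * ρ + 1) ^ 2 * ‖g b‖ ^ 2 := by ring
  have hinner : ∀ b, ⟪G, g b⟫_ℝ - β * ρ / 2 * (‖G‖ ^ 2 + ‖g b‖ ^ 2) ≤ ⟪G, g' b⟫_ℝ := by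
    intro b
    have h1 : ⟪G, g' b⟫_ℝ = ⟪G, g b⟫_ℝ + ⟪G, g' b - g b⟫_ℝ := by
      rw [← inner_add_right, add_sub_cancel]
    have h2 : -(‖G‖ * ‖g' b - g b‖) ≤ ⟪G, g' b - g b⟫_ℝ :=
      neg_le_of_abs_le (abs_real_inner_le_norm _ _)
    have h3 : ‖G‖ * ‖g' b - g b‖ ≤ ‖G‖ * (β * ρ * ‖g b‖) :=
      mul_le_mul_of_nonneg_left (hdiffg b) (norm_nonneg _)
    have h4 : ‖G‖ * (β * ρ * ‖g b‖) ≤ β * ρ / 2 * (‖G‖ ^ 2 + ‖g b‖ ^ 2) := by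
      nlinarith [sq_nonneg (‖G‖ - ‖g b‖), mul_nonneg (mul_nonneg hβ.le hρ0)
        (mul_nonneg (norm_nonneg G) (norm_nonneg (g b)))]
    linarith
  have hperb : ∀ b, f (x - η • g' b)
      ≤ (f x + η * β * ρ / 2 * ‖G‖ ^ 2) + (-η) * ⟪G, g b⟫_ℝ
        + (η * β * ρ / 2 + lam * η ^ 2 * (β * ρ + 1) ^ 2 / 2) * ‖g b‖ ^ 2 := by
    intro b
    have hdesc := smooth_descent hfdiff hlam.le hlamsmooth x (-(η • g' b))
    have he1 : x + -(η • g' b) = x - η • g' b := by rw [← sub_eq_add_neg]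
    have he2 : ⟪G, -(η • g' b)⟫_ℝ = -(η * ⟪G, g' b⟫_ℝ) := by
      rw [inner_neg_right, real_inner_smul_right]
    have he3 : ‖-(η • g' b)‖ ^ 2 = η ^ 2 * ‖g' b‖ ^ 2 := by
      rw [norm_neg, norm_smul, Real.norm_eq_abs, mul_pow, sq_abs]
    rw [he1, he2, he3] at hdesc
    have h5 : η * (⟪G, g b⟫_ℝ - β * ρ / 2 * (‖G‖ ^ 2 + ‖g b‖ ^ 2)) ≤ η * ⟪G, g' b⟫_ℝ :=
      mul_le_mul_of_nonneg_left (hinner b) hη0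
    have h6 : lam / 2 * (η ^ 2 * ‖g' b‖ ^ 2)
        ≤ lam / 2 * (η ^ 2 * ((β * ρ + 1) ^ 2 * ‖g b‖ ^ 2)) := by
      apply mul_le_mul_of_nonneg_left _ (by positivity)
      exact mul_le_mul_of_nonneg_left (hg'norm b) (by positivity)
    nlinarith [hdesc, h5, h6]
  -- expectation identities
  have hsum_g : ∑ b : Fin B → Fin n, g b
      = ((B:ℝ)⁻¹ * ((B * n ^ (B - 1) : ℕ) : ℝ)) • ∑ i, v i := by
    rw [← Finset.smul_sum]
    rw [Finset.sum_comm]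
    simp only [sum_eval]
    rw [Finset.sum_const, Finset.card_univ, Fintype.card_fin, smul_smul,
      ← Nat.cast_smul_eq_nsmul ℝ, smul_smul]
  have hc := cast_mul_pow_pred (n := n) B
  have hS1 : ∑ b : Fin B → Fin n, ⟪G, g b⟫_ℝ = (n:ℝ) ^ B * ‖G‖ ^ 2 := by
    rw [← inner_sum, hsum_g, real_inner_smul_right, hV, real_inner_smul_right,
      real_inner_self_eq_norm_sq]
    have hBne : (B:ℝ) ≠ 0 := hB0.ne'
    have h2 : ((B * n ^ (B - 1) : ℕ) : ℝ) * ((n:ℝ) * ‖G‖ ^ 2)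
        = (B:ℝ) * ((n:ℝ) ^ B * ‖G‖ ^ 2) := by
      linear_combination ‖G‖ ^ 2 * hc
    rw [mul_assoc, h2, ← mul_assoc, inv_mul_cancel₀ hBne, one_mul]
  have hP : ∑ i, ‖v i‖ ^ 2 ≤ 2 * β * ((n:ℝ) * f x) := by
    calc ∑ i, ‖v i‖ ^ 2 ≤ ∑ i, 2 * β * fi i x := by
          apply Finset.sum_le_sum
          intro i _
          exact grad_sq_le_of_nonneg (hdiff i) hβ (hβsmooth i) (fun y => hnonneg i y) x
      _ = 2 * β * ((n:ℝ) * f x) := by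
          rw [← Finset.mul_sum, hfdef x]
          field_simp
  have hfG : α * f x ≤ ‖G‖ ^ 2 := hPL x
  have hS2 : ∑ b : Fin B → Fin n, ‖g b‖ ^ 2 ≤ (n:ℝ) ^ B * (2 * κ * ‖G‖ ^ 2) := by
    have hgb : ∀ b : Fin B → Fin n, ‖g b‖ ^ 2 = (B:ℝ)⁻¹ ^ 2 * ‖∑ j, v (b j)‖ ^ 2 := by
      intro b
      show ‖(B:ℝ)⁻¹ • ∑ j, v (b j)‖ ^ 2 = _
      rw [norm_smul, Real.norm_eq_abs, mul_pow, sq_abs]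
    simp only [hgb]
    rw [← Finset.mul_sum]
    have hT := sum_norm_sq_batch v B
    rw [hV] at hT
    have hVnorm : ‖(n:ℝ) • G‖ ^ 2 = (n:ℝ) ^ 2 * ‖G‖ ^ 2 := by
      rw [norm_smul, Real.norm_eq_abs, mul_pow, sq_abs]
    rw [hVnorm] at hT
    have hn2 : (0:ℝ) < (n:ℝ) ^ 2 := by positivity
    have hPle : ∑ i, ‖v i‖ ^ 2 ≤ 2 * β * (n:ℝ) * α⁻¹ * ‖G‖ ^ 2 := by
      have hfx : f x ≤ α⁻¹ * ‖G‖ ^ 2 := by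
        rw [le_inv_mul_iff₀ hα]
        exact hfG
      calc ∑ i, ‖v i‖ ^ 2 ≤ 2 * β * ((n:ℝ) * f x) := hP
        _ ≤ 2 * β * (n:ℝ) * α⁻¹ * ‖G‖ ^ 2 := by
            have h := mul_le_mul_of_nonneg_left hfx (by positivity : (0:ℝ) ≤ 2 * β * (n:ℝ))
            linarith [h]
    have hstep2 : (∑ b : Fin B → Fin n, ‖∑ j, v (b j)‖ ^ 2) * (n:ℝ) ^ 2
        ≤ ((n:ℝ) ^ B * ((B:ℝ) * 2 * β / α + (B:ℝ) * ((B:ℝ) - 1)) * ‖G‖ ^ 2) * (n:ℝ) ^ 2 := by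
      rw [hT]
      have hco : (0:ℝ) ≤ (B:ℝ) * (n:ℝ) ^ B * (n:ℝ) := by positivity
      have := mul_le_mul_of_nonneg_left hPle hco
      have hα' : α⁻¹ * α = 1 := inv_mul_cancel₀ hα.ne'
      rw [div_eq_mul_inv]
      linarith [this]
    have hstep3 : (∑ b : Fin B → Fin n, ‖∑ j, v (b j)‖ ^ 2)
        ≤ (n:ℝ) ^ B * ((B:ℝ) * 2 * β / α + (B:ℝ) * ((B:ℝ) - 1)) * ‖G‖ ^ 2 :=
      le_of_mul_le_mul_right hstep2 hn2
    have hident : (B:ℝ)⁻¹ ^ 2 * ((n:ℝ) ^ B * ((B:ℝ) * 2 * β / α + (B:ℝ) * ((B:ℝ) - 1)) * ‖G‖ ^ 2)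
        = (n:ℝ) ^ B * (2 * κ * ‖G‖ ^ 2) := by
      rw [hκ]
      field_simp
      ring
    calc (B:ℝ)⁻¹ ^ 2 * ∑ b : Fin B → Fin n, ‖∑ j, v (b j)‖ ^ 2
        ≤ (B:ℝ)⁻¹ ^ 2 * ((n:ℝ) ^ B * ((B:ℝ) * 2 * β / α + (B:ℝ) * ((B:ℝ) - 1)) * ‖G‖ ^ 2) :=
          mul_le_mul_of_nonneg_left hstep3 (by positivity)
      _ = (n:ℝ) ^ B * (2 * κ * ‖G‖ ^ 2) := hident
  -- assemble
  set c1 := η * β * ρ / 2 with hc1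
  set c2 := lam * η ^ 2 * (β * ρ + 1) ^ 2 / 2 with hc2
  have hc12 : 0 ≤ c1 + c2 := by rw [hc1, hc2]; positivity
  have hsumle : ∑ b : Fin B → Fin n, f (x - η • g' b)
      ≤ (n:ℝ) ^ B * (f x + c1 * ‖G‖ ^ 2) + (-η) * ∑ b : Fin B → Fin n, ⟪G, g b⟫_ℝ
        + (c1 + c2) * ∑ b : Fin B → Fin n, ‖g b‖ ^ 2 := by
    calc ∑ b : Fin B → Fin n, f (x - η • g' b)
        ≤ ∑ b : Fin B → Fin n, ((f x + c1 * ‖G‖ ^ 2) + (-η) * ⟪G, g b⟫_ℝ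
            + (c1 + c2) * ‖g b‖ ^ 2) := Finset.sum_le_sum (fun b _ => hperb b)
      _ = _ := by
          rw [Finset.sum_add_distrib, Finset.sum_add_distrib, Finset.sum_const,
            Finset.card_univ, Fintype.card_fun, Fintype.card_fin, Fintype.card_fin,
            nsmul_eq_mul, ← Finset.mul_sum, ← Finset.mul_sum]
          push_cast
          ring
  have hcoef : c1 - η + (c1 + c2) * (2 * κ) = -(η * (1 - K) / 2) := by
    rw [hc1, hc2]
    linear_combination η * hηrel - η * hKdef
  have h1K : 0 ≤ 1 - K := by linarith
  have hmono : α * η / 2 * (1 - K) * f x ≤ η * (1 - K) / 2 * ‖G‖ ^ 2 := by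
    have hnn : (0:ℝ) ≤ η * (1 - K) / 2 := by positivity
    have := mul_le_mul_of_nonneg_left hfG hnn
    linarith [this]
  have hS2' : (c1 + c2) * ∑ b : Fin B → Fin n, ‖g b‖ ^ 2
      ≤ (c1 + c2) * ((n:ℝ) ^ B * (2 * κ * ‖G‖ ^ 2)) :=
    mul_le_mul_of_nonneg_left hS2 hc12
  have hfinal : (n:ℝ) ^ B * (f x + c1 * ‖G‖ ^ 2) + (-η) * ((n:ℝ) ^ B * ‖G‖ ^ 2)
      + (c1 + c2) * ((n:ℝ) ^ B * (2 * κ * ‖G‖ ^ 2))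
      ≤ (n:ℝ) ^ B * ((1 - α * η / 2 * (1 - K)) * f x) := by
    have heq : (n:ℝ) ^ B * (f x + c1 * ‖G‖ ^ 2) + (-η) * ((n:ℝ) ^ B * ‖G‖ ^ 2)
        + (c1 + c2) * ((n:ℝ) ^ B * (2 * κ * ‖G‖ ^ 2))
        = (n:ℝ) ^ B * (f x - η * (1 - K) / 2 * ‖G‖ ^ 2) := by
      linear_combination (n:ℝ) ^ B * ‖G‖ ^ 2 * hcoef
    rw [heq]
    apply mul_le_mul_of_nonneg_left _ (by positivity)
    linarith [hmono]
  calc ∑ b : Fin B → Fin n, f (x - η • g' b)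
      ≤ (n:ℝ) ^ B * (f x + c1 * ‖G‖ ^ 2) + (-η) * ∑ b : Fin B → Fin n, ⟪G, g b⟫_ℝ
        + (c1 + c2) * ∑ b : Fin B → Fin n, ‖g b‖ ^ 2 := hsumle
    _ ≤ (n:ℝ) ^ B * (f x + c1 * ‖G‖ ^ 2) + (-η) * ((n:ℝ) ^ B * ‖G‖ ^ 2)
        + (c1 + c2) * ((n:ℝ) ^ B * (2 * κ * ‖G‖ ^ 2)) := by
        rw [hS1]
        linarith [hS2']
    _ ≤ (n:ℝ) ^ B * ((1 - α * η / 2 * (1 - K)) * f x) := hfinal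

end OneStep

/-- Mini-batch SAM trajectory: at each step a batch `b : Fin B → Fin n` of i.i.d. uniform
indices is sampled and `x_{t+1} = x_t − η g_B(x_t + ρ g_B(x_t))` with
`g_B(y) = (1/B)∑_j ∇f_{b j}(y)`. -/
noncomputable def samBatchTraj {n B d : ℕ} (η ρ : ℝ)
    (fi : Fin n → EuclideanSpace ℝ (Fin d) → ℝ)
    (x0 : EuclideanSpace ℝ (Fin d)) :
    (t : ℕ) → (Fin t → (Fin B → Fin n)) → EuclideanSpace ℝ (Fin d)
  | 0, _ => x0
  | t + 1, ω =>
      let x := samBatchTraj η ρ fi x0 t (fun j => ω j.castSucc)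
      let b := ω (Fin.last t)
      let g : EuclideanSpace ℝ (Fin d) → EuclideanSpace ℝ (Fin d) :=
        fun y => (B : ℝ)⁻¹ • ∑ j, gradient (fi (b j)) y
      x - η • g (x + ρ • g x)

set_option maxHeartbeats 1000000 in
/-- Linear convergence of mini-batch SAM: under β-smoothness of each `f_i`, λ-smoothness
and α-PL of `f`, and interpolation, for any batch size `B ≥ 1` and
`ρ ≤ 1/((β/α + 1/2)β)`, with `κ_B = (1/B)((B−1)/2 + β/α)` and step size
`η★_B = (1 − (κ_B + 1/2)βρ)/(2λκ_B(βρ+1)²)`: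
`E[f(x_t)] ≤ (1 − (αη★_B/2)(1 − (κ_B + 1/2)βρ))ᵗ f(x_0)`. -/
theorem minibatch_sam_linear_convergence
    {n B d : ℕ} (hn : 0 < n) (hB : 1 ≤ B)
    (β lam α ρ : ℝ)
    (hβ : 0 < β) (hlam : 0 < lam) (hα : 0 < α)
    (hρ0 : 0 ≤ ρ) (hρ : ρ ≤ 1 / ((β / α + 1 / 2) * β))
    (fi : Fin n → EuclideanSpace ℝ (Fin d) → ℝ)
    (f : EuclideanSpace ℝ (Fin d) → ℝ)
    (hfdef : ∀ x, f x = (n : ℝ)⁻¹ * ∑ i, fi i x)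
    (hdiff : ∀ i, Differentiable ℝ (fi i)) (hfdiff : Differentiable ℝ f)
    (hnonneg : ∀ i x, 0 ≤ fi i x)
    (hβsmooth : ∀ i x y, ‖gradient (fi i) x - gradient (fi i) y‖ ≤ β * ‖x - y‖)
    (hlamsmooth : ∀ x y, ‖gradient f x - gradient f y‖ ≤ lam * ‖x - y‖)
    (xstar : EuclideanSpace ℝ (Fin d))
    (hPL : ∀ x, α * (f x - f xstar) ≤ ‖gradient f x‖ ^ 2)
    (hinterp : ∀ i, fi i xstar = 0 ∧ gradient (fi i) xstar = 0)
    (x0 : EuclideanSpace ℝ (Fin d)) :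
    ∀ t : ℕ,
      (((n : ℝ) ^ B) ^ t)⁻¹ *
          ∑ ω : Fin t → (Fin B → Fin n),
            f (samBatchTraj
                ((1 - ((B : ℝ)⁻¹ * (((B : ℝ) - 1) / 2 + β / α) + 1 / 2) * β * ρ) /
                  (2 * lam * ((B : ℝ)⁻¹ * (((B : ℝ) - 1) / 2 + β / α)) * (β * ρ + 1) ^ 2))
                ρ fi x0 t ω)
        ≤ (1 - α * ((1 - ((B : ℝ)⁻¹ * (((B : ℝ) - 1) / 2 + β / α) + 1 / 2) * β * ρ) /
                  (2 * lam * ((B : ℝ)⁻¹ * (((B : ℝ) - 1) / 2 + β / α)) * (β * ρ + 1) ^ 2)) / 2 *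
                (1 - ((B : ℝ)⁻¹ * (((B : ℝ) - 1) / 2 + β / α) + 1 / 2) * β * ρ)) ^ t
            * f x0 := by
  have hB0 : (0:ℝ) < (B:ℝ) := by exact_mod_cast hB
  have hn0 : (0:ℝ) < (n:ℝ) := by exact_mod_cast hn
  have hB1 : (1:ℝ) ≤ (B:ℝ) := by exact_mod_cast hB
  set κ : ℝ := (B : ℝ)⁻¹ * (((B : ℝ) - 1) / 2 + β / α) with hκdef
  set η : ℝ := (1 - (κ + 1/2) * β * ρ) / (2 * lam * κ * (β * ρ + 1) ^ 2) with hηdef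
  set c : ℝ := 1 - α * η / 2 * (1 - (κ + 1/2) * β * ρ) with hcdef
  show ∀ t : ℕ, (((n : ℝ) ^ B) ^ t)⁻¹ *
      ∑ ω : Fin t → (Fin B → Fin n), f (samBatchTraj η ρ fi x0 t ω) ≤ c ^ t * f x0
  have hκpos : 0 < κ := by
    have h2 : 0 < β / α := div_pos hβ hα
    rw [hκdef]
    have : 0 < ((B:ℝ) - 1) / 2 + β / α := by linarith
    positivity
  -- f xstar = 0, PL without reference point, f nonneg
  have hfstar : f xstar = 0 := by
    rw [hfdef]
    have : ∀ i : Fin n, fi i xstar = 0 := fun i => (hinterp i).1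
    simp [this]
  have hPL' : ∀ x, α * f x ≤ ‖gradient f x‖ ^ 2 := by
    intro x
    have := hPL x
    rw [hfstar] at this
    simpa using this
  have hfnonneg : ∀ x, 0 ≤ f x := by
    intro x
    rw [hfdef]
    have : 0 ≤ ∑ i, fi i x := Finset.sum_nonneg (fun i _ => hnonneg i x)
    positivity
  by_cases hzero : ∀ z, f z = 0
  · intro t
    simp [hzero]
  · -- there is a point with positive value
    push_neg at hzero
    obtain ⟨z, hz⟩ := hzero
    have hfz : 0 < f z := lt_of_le_of_ne (hfnonneg z) (Ne.symm hz)
    -- f is β-smooth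
    have hfeq : f = fun y => (n:ℝ)⁻¹ * ∑ i, fi i y := funext hfdef
    have hGx : ∀ y, gradient f y = (n:ℝ)⁻¹ • ∑ i, gradient (fi i) y := by
      intro y
      conv_lhs => rw [hfeq]
      exact gradient_const_mul_sum fi hdiff _ y
    have hfβ : ∀ x y, ‖gradient f x - gradient f y‖ ≤ β * ‖x - y‖ := by
      intro x y
      rw [hGx x, hGx y, ← smul_sub, ← Finset.sum_sub_distrib, norm_smul, Real.norm_eq_abs,
        abs_of_nonneg (by positivity : (0:ℝ) ≤ (n:ℝ)⁻¹)]
      have hsum : ‖∑ i, (gradient (fi i) x - gradient (fi i) y)‖ ≤ (n:ℝ) * (β * ‖x - y‖) := by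
        calc ‖∑ i, (gradient (fi i) x - gradient (fi i) y)‖
            ≤ ∑ i : Fin n, ‖gradient (fi i) x - gradient (fi i) y‖ := norm_sum_le _ _
          _ ≤ ∑ i : Fin n, β * ‖x - y‖ := Finset.sum_le_sum (fun i _ => hβsmooth i x y)
          _ = (n:ℝ) * (β * ‖x - y‖) := by
              rw [Finset.sum_const, Finset.card_univ, Fintype.card_fin, nsmul_eq_mul]
      calc (n:ℝ)⁻¹ * ‖∑ i, (gradient (fi i) x - gradient (fi i) y)‖
          ≤ (n:ℝ)⁻¹ * ((n:ℝ) * (β * ‖x - y‖)) :=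
            mul_le_mul_of_nonneg_left hsum (by positivity)
        _ = β * ‖x - y‖ := by field_simp
    have hβα : α ≤ 2 * β := by
      have h1 := hPL' z
      have h2 := grad_sq_le_of_nonneg hfdiff hβ hfβ hfnonneg z
      have h4 := h1.trans h2
      have h3 : α * f z ≤ 2 * β * f z := by linarith
      exact le_of_mul_le_mul_right h3 hfz
    have hla2 : α ≤ 2 * lam := by
      have h1 := hPL' z
      have h2 := grad_sq_le_of_nonneg hfdiff hlam hlamsmooth hfnonneg z
      have h4 := h1.trans h2
      have h3 : α * f z ≤ 2 * lam * f z := by linarith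
      exact le_of_mul_le_mul_right h3 hfz
    have h12 : 1/2 ≤ β / α := by
      rw [le_div_iff₀ hα]
      linarith
    have hκle : κ ≤ β / α := by
      rw [hκdef, inv_mul_le_iff₀ hB0]
      nlinarith [hB1, h12]
    have hκhalf : 1/2 ≤ κ := by
      have hh : (B:ℝ) * (1/2) ≤ ((B:ℝ) - 1) / 2 + β / α := by linarith
      calc (1:ℝ)/2 = (B:ℝ)⁻¹ * ((B:ℝ) * (1/2)) := by field_simp
        _ ≤ κ := by rw [hκdef]; exact mul_le_mul_of_nonneg_left hh (by positivity)
    have hK1 : (κ + 1/2) * β * ρ ≤ 1 := by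
      have hd : 0 < (β / α + 1/2) * β := by positivity
      have h2 : (β / α + 1/2) * β * ρ ≤ 1 := by
        have h5 := mul_le_mul_of_nonneg_left hρ hd.le
        rwa [mul_one_div, div_self hd.ne'] at h5
      have h3 : (κ + 1/2) * β * ρ ≤ (β / α + 1/2) * β * ρ := by
        apply mul_le_mul_of_nonneg_right _ hρ0
        apply mul_le_mul_of_nonneg_right _ hβ.le
        linarith
      linarith
    set K := (κ + 1/2) * β * ρ with hKdef
    have hK0 : 0 ≤ K := by positivity
    have h1K : 0 ≤ 1 - K := by linarith
    have hη0 : 0 ≤ η := by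
      rw [hηdef]
      apply div_nonneg (by linarith)
      positivity
    have hc0 : 0 ≤ c := by
      have hsq : 1 ≤ (β * ρ + 1) ^ 2 := by nlinarith [mul_nonneg hβ.le hρ0]
      have hden : (0:ℝ) < 2 * lam * κ * (β * ρ + 1) ^ 2 := by positivity
      have hnum : α * (1 - K) * (1 - K) ≤ 2 * lam * κ * (β * ρ + 1) ^ 2 * 2 := by
        have e1 : (1 - K) * (1 - K) ≤ 1 := by nlinarith
        have e2 : α * ((1 - K) * (1 - K)) ≤ α := by nlinarith [hα.le]
        have e3 : 2 * lam ≤ 2 * lam * κ * (β * ρ + 1) ^ 2 * 2 := by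
          nlinarith [hlam.le, hκhalf, hsq, mul_nonneg hlam.le (sub_nonneg.mpr hκhalf)]
        nlinarith [e2, e3, hla2]
      have heq : α * η / 2 * (1 - K) = α * (1 - K) * (1 - K) / (2 * (2 * lam * κ * (β * ρ + 1) ^ 2)) := by
        have hDne : (2 * lam * κ * (β * ρ + 1) ^ 2) ≠ 0 := by positivity
        rw [hηdef]
        field_simp
      have hle1 : α * η / 2 * (1 - K) ≤ 1 := by
        rw [heq, div_le_one (by positivity)]
        linarith
      rw [hcdef]
      linarith
    -- induction
    intro t
    induction t with
    | zero => simp [samBatchTraj]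
    | succ t ih =>
      have hstep := fun x => one_step hn hB β lam α ρ η κ hβ hlam hα hρ0 hκdef hηdef hK1
        fi f hfdef hdiff hfdiff hnonneg hβsmooth hlamsmooth hPL' x
      have hdecomp : ∑ ω : Fin (t+1) → (Fin B → Fin n), f (samBatchTraj η ρ fi x0 (t+1) ω)
          = ∑ ω' : Fin t → (Fin B → Fin n), ∑ a : Fin B → Fin n,
              f (samBatchTraj η ρ fi x0 (t+1)
                (Fin.snocEquiv (fun _ => Fin B → Fin n) (a, ω'))) := by
        rw [← Equiv.sum_comp (Fin.snocEquiv (fun _ => Fin B → Fin n))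
          (fun ω => f (samBatchTraj η ρ fi x0 (t+1) ω)), Fintype.sum_prod_type]
        rw [Finset.sum_comm]
      have htraj : ∀ (ω' : Fin t → (Fin B → Fin n)) (a : Fin B → Fin n),
          samBatchTraj η ρ fi x0 (t+1) (Fin.snocEquiv (fun _ => Fin B → Fin n) (a, ω'))
          = samBatchTraj η ρ fi x0 t ω' - η • ((B:ℝ)⁻¹ • ∑ j, gradient (fi (a j))
              (samBatchTraj η ρ fi x0 t ω' + ρ • ((B:ℝ)⁻¹ • ∑ j, gradient (fi (a j))
                (samBatchTraj η ρ fi x0 t ω')))) := by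
        intro ω' a
        show samBatchTraj η ρ fi x0 (t+1) (Fin.snoc ω' a) = _
        simp only [samBatchTraj, Fin.snoc_castSucc, Fin.snoc_last]
      have hsum1 : ∑ ω : Fin (t+1) → (Fin B → Fin n), f (samBatchTraj η ρ fi x0 (t+1) ω)
          ≤ (n:ℝ)^B * (c * ∑ ω' : Fin t → (Fin B → Fin n), f (samBatchTraj η ρ fi x0 t ω')) := by
        rw [hdecomp]
        calc ∑ ω' : Fin t → (Fin B → Fin n), ∑ a : Fin B → Fin n,
              f (samBatchTraj η ρ fi x0 (t+1) (Fin.snocEquiv (fun _ => Fin B → Fin n) (a, ω')))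
            ≤ ∑ ω' : Fin t → (Fin B → Fin n), (n:ℝ)^B * (c * f (samBatchTraj η ρ fi x0 t ω')) := by
              apply Finset.sum_le_sum
              intro ω' _
              have := hstep (samBatchTraj η ρ fi x0 t ω')
              calc ∑ a : Fin B → Fin n, f (samBatchTraj η ρ fi x0 (t+1)
                    (Fin.snocEquiv (fun _ => Fin B → Fin n) (a, ω')))
                  = ∑ a : Fin B → Fin n, f (samBatchTraj η ρ fi x0 t ω'
                      - η • ((B:ℝ)⁻¹ • ∑ j, gradient (fi (a j))
                        (samBatchTraj η ρ fi x0 t ω' + ρ • ((B:ℝ)⁻¹ • ∑ j, gradient (fi (a j))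
                          (samBatchTraj η ρ fi x0 t ω'))))) := by
                    apply Finset.sum_congr rfl
                    intro a _
                    rw [htraj ω' a]
                _ ≤ (n:ℝ)^B * (c * f (samBatchTraj η ρ fi x0 t ω')) := this
          _ = (n:ℝ)^B * (c * ∑ ω' : Fin t → (Fin B → Fin n), f (samBatchTraj η ρ fi x0 t ω')) := by
              rw [← Finset.mul_sum, ← Finset.mul_sum]
      have hNpos : (0:ℝ) < ((n:ℝ)^B)^(t+1) := by positivity
      have hNinv : (((n:ℝ)^B)^(t+1))⁻¹ * (n:ℝ)^B = (((n:ℝ)^B)^t)⁻¹ := by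
        rw [pow_succ]
        have h1 : ((n:ℝ)^B)^t ≠ 0 := by positivity
        have h2 : ((n:ℝ)^B) ≠ 0 := by positivity
        field_simp
      calc (((n:ℝ)^B)^(t+1))⁻¹ * ∑ ω : Fin (t+1) → (Fin B → Fin n),
            f (samBatchTraj η ρ fi x0 (t+1) ω)
          ≤ (((n:ℝ)^B)^(t+1))⁻¹ * ((n:ℝ)^B * (c * ∑ ω' : Fin t → (Fin B → Fin n),
              f (samBatchTraj η ρ fi x0 t ω'))) :=
            mul_le_mul_of_nonneg_left hsum1 (by positivity)
        _ = c * ((((n:ℝ)^B)^t)⁻¹ * ∑ ω' : Fin t → (Fin B → Fin n),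
              f (samBatchTraj η ρ fi x0 t ω')) := by
            rw [← mul_assoc, hNinv]
            ring
        _ ≤ c * (c ^ t * f x0) := mul_le_mul_of_nonneg_left ih hc0
        _ = c ^ (t+1) * f x0 := by rw [pow_succ]; ring
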